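/- (Lemma 4) Let G=(V,E) be a graph of convex sets with origin s and destination d, h an admissible heuristic, and S a cut-set. Suppose a path P* = (v*_1=s, v*_2, …, v*_k=d) together with points x_{v*_i} ∈ X_{v*_i} attains the optimal cost C_opt(s,d). Let p be the least index with v*_p ∉ S (p exists since d ∉ S), so v*_p ∈ N_S. Then for every subset S' ⊆ N_S with v*_p ∈ S', one has C_opt(s,d) ≥ R*_opt(S,S'). -/

import Mathlib

open scoped BigOperators Pointwise Classical

noncomputable section

/-- A graph of convex sets: a finite directed edge set together with a nonempty
compact convex set in `ℝ^n` attached to each vertex. -/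
structure GCS (V : Type*) (n : ℕ) where
  E : Finset (V × V)
  X : V → Set (EuclideanSpace ℝ (Fin n))
  nonempty : ∀ v, (X v).Nonempty
  compact : ∀ v, IsCompact (X v)
  convex : ∀ v, Convex ℝ (X v)

/-- The cost of a path of `k` vertices with chosen points `x 0, …, x (k-1)`. -/
def pathCost {n : ℕ} (k : ℕ) (x : ℕ → EuclideanSpace ℝ (Fin n)) : ℝ :=
  ∑ i ∈ Finset.range (k - 1), ‖x i - x (i + 1)‖

namespace GCS

variable {V : Type*} {n : ℕ}

/-- `(v 0, …, v (k-1))` is a path in `G` with chosen points `x i ∈ X (v i)`. -/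
def IsPathOn (G : GCS V n) (k : ℕ) (v : ℕ → V) (x : ℕ → EuclideanSpace ℝ (Fin n)) : Prop :=
  1 ≤ k ∧ (∀ i, i + 1 < k → (v i, v (i + 1)) ∈ G.E) ∧ ∀ i, i < k → x i ∈ G.X (v i)

/-- `C_opt(a,b)`: the infimum of path costs over all paths from `a` to `b`
and all choices of points (`⊤` if no such path exists). -/
def Copt (G : GCS V n) (a b : V) : EReal :=
  sInf {c : EReal | ∃ (k : ℕ) (v : ℕ → V) (x : ℕ → EuclideanSpace ℝ (Fin n)),
    G.IsPathOn k v x ∧ v 0 = a ∧ v (k - 1) = b ∧ c = ((pathCost k x : ℝ) : EReal)}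

/-- A heuristic `h` is admissible for destination `d`. -/
def Admissible (G : GCS V n) (d : V) (h : V → ℝ) : Prop :=
  h d = 0 ∧ ∀ v : V, (h v : EReal) ≤ G.Copt v d

/-- The neighborhood `N_S` of a set `S` of vertices. -/
def nbr [Fintype V] (G : GCS V n) (S : Finset V) : Finset V :=
  Finset.univ.filter fun v => v ∉ S ∧ ∃ u ∈ S, (u, v) ∈ G.E

/-- `C*_opt(S,S')`: the infimum over all paths starting at `s`, staying in `S` except
for the last vertex, and ending at a terminal vertex in `S'`, of the path cost plus the
heuristic value of the terminal vertex. -/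
def CstarOpt (G : GCS V n) (h : V → ℝ) (s : V) (S S' : Finset V) : EReal :=
  sInf {c : EReal | ∃ (k : ℕ) (v : ℕ → V) (x : ℕ → EuclideanSpace ℝ (Fin n)),
    G.IsPathOn k v x ∧ v 0 = s ∧ (∀ i, i < k - 1 → v i ∈ S) ∧ v (k - 1) ∈ S' ∧
    c = ((pathCost k x + h (v (k - 1)) : ℝ) : EReal)}

/-- The edge set `Ē` of the subgraph used by SPP*-GCS: edges leaving `S` into `S ∪ S'`. -/
def Ebar (G : GCS V n) (S S' : Finset V) : Finset (V × V) :=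
  G.E.filter fun e => e.1 ∈ S ∧ e.2 ∈ S ∪ S'

end GCS

/-- The perspective `X̄ = {(x, λ) : λ ≥ 0, x ∈ λX}` of a set `X ⊆ ℝ^n`. -/
def persp {n : ℕ} (X : Set (EuclideanSpace ℝ (Fin n))) :
    Set (EuclideanSpace ℝ (Fin n) × ℝ) :=
  {p | 0 ≤ p.2 ∧ p.1 ∈ p.2 • X}

namespace GCS

variable {V : Type*} {n : ℕ}

/-- Feasibility for the convex relaxation of SPP*-GCS on `(S, S')`. -/
def RelaxFeasible (G : GCS V n) (s : V) (S S' : Finset V)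
    (y : V × V → ℝ) (α : V → ℝ) (z z' : V × V → EuclideanSpace ℝ (Fin n)) : Prop :=
  (∀ e ∈ G.Ebar S S', y e ∈ Set.Icc (0 : ℝ) 1) ∧
  (∀ v ∈ S', α v ∈ Set.Icc (0 : ℝ) 1) ∧
  (∑ v ∈ S', α v) = 1 ∧
  (∑ e ∈ (G.Ebar S S').filter fun e => e.1 = s, y e) = 1 ∧
  (∀ v ∈ S', (∑ e ∈ (G.Ebar S S').filter fun e => e.2 = v, y e) = α v) ∧
  (∀ v ∈ S, v ≠ s →
    (∑ e ∈ (G.Ebar S S').filter fun e => e.2 = v, z' e)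
      = (∑ e ∈ (G.Ebar S S').filter fun e => e.1 = v, z e) ∧
    (∑ e ∈ (G.Ebar S S').filter fun e => e.2 = v, y e)
      = (∑ e ∈ (G.Ebar S S').filter fun e => e.1 = v, y e)) ∧
  (∀ e ∈ G.Ebar S S', (z e, y e) ∈ persp (G.X e.1) ∧ (z' e, y e) ∈ persp (G.X e.2))

/-- The objective of the convex relaxation of SPP*-GCS. -/
def relaxObj (G : GCS V n) (h : V → ℝ) (S S' : Finset V)
    (y : V × V → ℝ) (α : V → ℝ) (z z' : V × V → EuclideanSpace ℝ (Fin n)) : ℝ :=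
  (∑ e ∈ G.Ebar S S', ‖z e - z' e‖) + ∑ v ∈ S', α v * h v

/-- `R*_opt(S,S')`: the optimal value of the convex relaxation of SPP*-GCS. -/
def RstarOpt (G : GCS V n) (h : V → ℝ) (s : V) (S S' : Finset V) : EReal :=
  sInf {c : EReal | ∃ y α z z', G.RelaxFeasible s S S' y α z z' ∧
    c = ((G.relaxObj h S S' y α z z' : ℝ) : EReal)}

/-- The optimal value of the MICP for SPP*-GCS (the relaxation with binary `y` and `α`). -/
def MICPval (G : GCS V n) (h : V → ℝ) (s : V) (S S' : Finset V) : EReal :=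
  sInf {c : EReal | ∃ y α z z', G.RelaxFeasible s S S' y α z z' ∧
    (∀ e ∈ G.Ebar S S', y e = 0 ∨ y e = 1) ∧
    (∀ v ∈ S', α v = 0 ∨ α v = 1) ∧
    c = ((G.relaxObj h S S' y α z z' : ℝ) : EReal)}

end GCS

end


open Finset in
private lemma sum_shift_eq {M : Type*} [AddCommMonoid M] (m : ℕ) (F : ℕ → M)
    (h0 : F 0 = 0) (hm : F m = 0) :
    ∑ i ∈ range m, F (i + 1) = ∑ i ∈ range m, F i := by
  have h1 := Finset.sum_range_succ' F m
  have h2 := Finset.sum_range_succ F m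
  rw [h0, add_zero] at h1
  rw [hm, add_zero] at h2
  rw [← h1, h2]

private lemma norm_sub_le_walk {n : ℕ} (x : ℕ → EuclideanSpace ℝ (Fin n)) (a N : ℕ) :
    ‖x a - x (a + N)‖ ≤ ∑ i ∈ Finset.range N, ‖x (a + i) - x (a + i + 1)‖ := by
  have := dist_le_range_sum_dist (fun t => x (a + t)) N
  simpa [dist_eq_norm, add_assoc] using this

open Finset in
private lemma walk_shorten {V : Type*} {n : ℕ} (G : GCS V n) (Q : V → Prop) :
    ∀ m : ℕ, ∀ (w : ℕ → V) (x : ℕ → EuclideanSpace ℝ (Fin n)),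
    (∀ i, i < m → (w i, w (i+1)) ∈ G.E) →
    (∀ i, i ≤ m → x i ∈ G.X (w i)) →
    (∀ i, i < m → Q (w i)) →
    ∃ (m' : ℕ) (w' : ℕ → V) (x' : ℕ → EuclideanSpace ℝ (Fin n)),
      (∀ i, i < m' → (w' i, w' (i+1)) ∈ G.E) ∧
      (∀ i, i ≤ m' → x' i ∈ G.X (w' i)) ∧
      (∀ i, i < m' → Q (w' i)) ∧
      w' 0 = w 0 ∧ w' m' = w m ∧
      Set.InjOn w' (Set.Iic m') ∧
      ∑ i ∈ range m', ‖x' i - x' (i+1)‖ ≤ ∑ i ∈ range m, ‖x i - x (i+1)‖ := by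
  intro m
  induction m using Nat.strong_induction_on with
  | _ m ih =>
  intro w x hE hX hQ
  by_cases hinj : Set.InjOn w (Set.Iic m)
  · exact ⟨m, w, x, hE, hX, hQ, rfl, rfl, hinj, le_refl _⟩
  · rw [Set.InjOn] at hinj
    push_neg at hinj
    obtain ⟨a0, ha0, b0, hb0, hab0, hne0⟩ := hinj
    rw [Set.mem_Iic] at ha0 hb0
    obtain ⟨a, b, ha, hb, hlt, hab⟩ : ∃ a b, a ≤ m ∧ b ≤ m ∧ a < b ∧ w a = w b := by
      rcases hne0.lt_or_gt with hlt | hlt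
      · exact ⟨a0, b0, ha0, hb0, hlt, hab0⟩
      · exact ⟨b0, a0, hb0, ha0, hlt, hab0.symm⟩
    set c := b - a with hc
    have hc1 : 1 ≤ c := by omega
    set m1 := m - c with hm1
    have hm1lt : m1 < m := by omega
    have ham1 : a ≤ m1 := by omega
    set w1 : ℕ → V := fun t => if t < a then w t else w (t + c) with hw1
    set x1 : ℕ → EuclideanSpace ℝ (Fin n) := fun t => if t ≤ a then x t else x (t + c) with hx1
    have hwa : w1 a = w a := by
      simp only [hw1]
      rw [if_neg (lt_irrefl a), show a + c = b by omega]
      exact hab.symm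
    have hw1e : ∀ t, t ≤ a → w1 t = w t := by
      intro t ht
      rcases eq_or_lt_of_le ht with h | h
      · rw [h]; exact hwa
      · simp [hw1, h]
    have hw1g : ∀ t, a ≤ t → w1 t = w (t + c) := by
      intro t ht; simp [hw1, not_lt.2 ht]
    have hx1e : ∀ t, t ≤ a → x1 t = x t := by intro t ht; simp [hx1, ht]
    have hx1g : ∀ t, a < t → x1 t = x (t + c) := by
      intro t ht; simp [hx1, not_le.2 ht]
    have hE1 : ∀ i, i < m1 → (w1 i, w1 (i+1)) ∈ G.E := by
      intro i hi
      rcases le_or_gt (i + 1) a with h1 | h1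
      · rw [hw1e i (by omega), hw1e (i+1) h1]
        exact hE i (by omega)
      · rcases le_or_gt a i with h2 | h2
        · rw [hw1g i h2, hw1g (i+1) (by omega)]
          rw [show i + 1 + c = i + c + 1 by omega]
          exact hE (i + c) (by omega)
        · omega
    have hX1 : ∀ i, i ≤ m1 → x1 i ∈ G.X (w1 i) := by
      intro i hi
      rcases le_or_gt i a with h1 | h1
      · rw [hx1e i h1, hw1e i h1]; exact hX i (by omega)
      · rw [hx1g i h1, hw1g i (le_of_lt h1)]; exact hX (i + c) (by omega)
    have hQ1 : ∀ i, i < m1 → Q (w1 i) := by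
      intro i hi
      rcases lt_or_ge i a with h1 | h1
      · rw [hw1e i (le_of_lt h1)]; exact hQ i (by omega)
      · rw [hw1g i h1]; exact hQ (i + c) (by omega)
    have h01 : w1 0 = w 0 := hw1e 0 (Nat.zero_le a)
    have hm1e : w1 m1 = w m := by
      rw [hw1g m1 ham1, show m1 + c = m by omega]
    have hcost1 : ∑ i ∈ range m1, ‖x1 i - x1 (i+1)‖ ≤ ∑ i ∈ range m, ‖x i - x (i+1)‖ := by
      rcases eq_or_lt_of_le ham1 with heq | halt
      · -- b = m, m1 = a
        have : ∑ i ∈ range m1, ‖x1 i - x1 (i+1)‖ = ∑ i ∈ range m1, ‖x i - x (i+1)‖ := by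
          refine Finset.sum_congr rfl fun i hi => ?_
          rw [mem_range] at hi
          rw [hx1e i (by omega), hx1e (i+1) (by omega)]
        rw [this]
        refine Finset.sum_le_sum_of_subset_of_nonneg ?_ fun i _ _ => norm_nonneg _
        exact Finset.range_subset_range.2 (le_of_lt hm1lt)
      · -- a < m1, so b < m
        have hbm : b < m := by omega
        have split1 : ∑ i ∈ range m1, ‖x1 i - x1 (i+1)‖
            = (∑ i ∈ range a, ‖x1 i - x1 (i+1)‖) + ∑ i ∈ Ico a m1, ‖x1 i - x1 (i+1)‖ := by
          rw [range_eq_Ico, ← Finset.sum_Ico_consecutive _ (Nat.zero_le a) ham1, ← range_eq_Ico]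
        have split2 : ∑ i ∈ Ico a m1, ‖x1 i - x1 (i+1)‖
            = ‖x1 a - x1 (a+1)‖ + ∑ i ∈ Ico (a+1) m1, ‖x1 i - x1 (i+1)‖ :=
          Finset.sum_eq_sum_Ico_succ_bot halt _
        have e1 : ∑ i ∈ range a, ‖x1 i - x1 (i+1)‖ = ∑ i ∈ range a, ‖x i - x (i+1)‖ := by
          refine Finset.sum_congr rfl fun i hi => ?_
          rw [mem_range] at hi
          rw [hx1e i (by omega), hx1e (i+1) (by omega)]
        have e2 : ‖x1 a - x1 (a+1)‖ ≤ ∑ t ∈ Ico a (b+1), ‖x t - x (t+1)‖ := by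
          rw [hx1e a le_rfl, hx1g (a+1) (by omega), show a + 1 + c = a + (c+1) by omega]
          have := norm_sub_le_walk x a (c+1)
          rw [Finset.sum_Ico_eq_sum_range, show b + 1 - a = c + 1 by omega]
          calc ‖x a - x (a + (c+1))‖ ≤ ∑ i ∈ range (c+1), ‖x (a + i) - x (a + i + 1)‖ := this
            _ = ∑ i ∈ range (c+1), ‖x (a + i) - x (a + i + 1)‖ := rfl
        have e3 : ∑ i ∈ Ico (a+1) m1, ‖x1 i - x1 (i+1)‖
            = ∑ t ∈ Ico (b+1) m, ‖x t - x (t+1)‖ := by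
          rw [Finset.sum_Ico_eq_sum_range, Finset.sum_Ico_eq_sum_range,
            show m - (b+1) = m1 - (a+1) by omega]
          refine Finset.sum_congr rfl fun i hi => ?_
          rw [hx1g (a+1+i) (by omega), hx1g (a+1+i+1) (by omega),
            show a + 1 + i + c = b + 1 + i by omega, show a + 1 + i + 1 + c = b + 1 + i + 1 by omega]
        have rhs : ∑ i ∈ range m, ‖x i - x (i+1)‖
            = (∑ i ∈ range a, ‖x i - x (i+1)‖) + ((∑ t ∈ Ico a (b+1), ‖x t - x (t+1)‖)
              + ∑ t ∈ Ico (b+1) m, ‖x t - x (t+1)‖) := by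
          rw [range_eq_Ico, ← Finset.sum_Ico_consecutive _ (Nat.zero_le a) (by omega : a ≤ m),
            ← Finset.sum_Ico_consecutive _ (by omega : a ≤ b + 1) (by omega : b + 1 ≤ m), ← range_eq_Ico]
        rw [split1, split2, e1, e3, rhs]
        have := add_le_add_left (add_le_add_right e2 (∑ t ∈ Ico (b+1) m, ‖x t - x (t+1)‖)) (∑ i ∈ range a, ‖x i - x (i+1)‖)
        linarith
    obtain ⟨m', w', x', r1, r2, r3, r4, r5, r6, r7⟩ := ih m1 hm1lt w1 x1 hE1 hX1 hQ1
    exact ⟨m', w', x', r1, r2, r3, r4.trans h01, r5.trans hm1e, r6, r7.trans hcost1⟩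


private lemma sum_edge_exchange {β M : Type*} [AddCommMonoid M] [DecidableEq β]
    (m : ℕ) (e : ℕ → β) (F : Finset β) (f : ℕ → M) :
    ∑ aa ∈ F, (∑ i ∈ Finset.range m, if aa = e i then f i else 0)
      = ∑ i ∈ Finset.range m, if e i ∈ F then f i else 0 := by
  rw [Finset.sum_comm]
  exact Finset.sum_congr rfl fun i _ => Finset.sum_ite_eq' F (e i) (fun _ => f i)

/-- Lemma 4: If an optimal path for SPP-GCS leaves the cut-set `S` for the
first time at its `p`-th vertex `v p`, then `v p ∈ N_S`, and for every `S' ⊆ N_S`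
containing `v p` we have `C_opt(s,d) ≥ R*_opt(S,S')`. -/
theorem stmt6 {V : Type*} [Fintype V] {n : ℕ} (G : GCS V n) (s d : V) (h : V → ℝ)
    (hadm : G.Admissible d h)
    (S : Finset V) (hs : s ∈ S) (hd : d ∉ S)
    (k : ℕ) (v : ℕ → V) (x : ℕ → EuclideanSpace ℝ (Fin n))
    (hpath : G.IsPathOn k v x) (hstart : v 0 = s) (hend : v (k - 1) = d)
    (hopt : ((pathCost k x : ℝ) : EReal) = G.Copt s d)
    (p : ℕ) (hpk : p < k) (hpS : v p ∉ S) (hleast : ∀ i, i < p → v i ∈ S) :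
    v p ∈ G.nbr S ∧
    ∀ S' : Finset V, S' ⊆ G.nbr S → v p ∈ S' → G.RstarOpt h s S S' ≤ G.Copt s d := by
  obtain ⟨hk1, hEdges, hPts⟩ := hpath
  have hp0 : 0 < p := by
    rcases Nat.eq_zero_or_pos p with hcase | hcase
    · exact absurd (hcase ▸ hstart ▸ hs) hpS
    · exact hcase
  have hedge0 : (v (p-1), v p) ∈ G.E := by
    have := hEdges (p-1) (by omega)
    rwa [show p - 1 + 1 = p by omega] at this
  have hnbr : v p ∈ G.nbr S := by
    rw [GCS.nbr, Finset.mem_filter]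
    exact ⟨Finset.mem_univ _, hpS, v (p-1), hleast _ (by omega), hedge0⟩
  refine ⟨hnbr, fun S' hS'sub hvpS' => ?_⟩
  have hS'notS : ∀ u ∈ S', u ∉ S := by
    intro u hu
    have := hS'sub hu
    rw [GCS.nbr, Finset.mem_filter] at this
    exact this.2.1
  obtain ⟨m, w, xx, hE', hX', hQ', hw0, hwm, hinjw, hcost⟩ :=
    walk_shorten G (· ∈ S) p v x (fun i hi => hEdges i (by omega))
      (fun i hi => hPts i (by omega)) hleast
  rw [hstart] at hw0
  have hm0 : 0 < m := by
    rcases Nat.eq_zero_or_pos m with hcase | hcase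
    · exact absurd (by rw [← hwm, hcase, hw0]; exact hs) hpS
    · exact hcase
  classical
  set e : ℕ → V × V := fun i => (w i, w (i+1)) with he
  have heinj : ∀ i ∈ Finset.range m, ∀ j ∈ Finset.range m, e i = e j → i = j := by
    intro i hi j hj hij
    rw [Finset.mem_range] at hi hj
    have hww : w i = w j := congrArg Prod.fst hij
    exact hinjw (Set.mem_Iic.2 (by omega)) (Set.mem_Iic.2 (by omega)) hww
  have hmemEb : ∀ i, i < m → e i ∈ G.Ebar S S' := by
    intro i hi
    rw [GCS.Ebar, Finset.mem_filter]
    refine ⟨hE' i hi, hQ' i hi, ?_⟩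
    rw [Finset.mem_union]
    rcases eq_or_lt_of_le (Nat.succ_le_of_lt hi) with hcase | hcase
    · right; rw [he]; simp only; rw [show i + 1 = m by omega, hwm]; exact hvpS'
    · left; exact hQ' (i+1) hcase
  set y : V × V → ℝ := fun aa => ∑ i ∈ Finset.range m, if aa = e i then 1 else 0 with hy
  set z : V × V → EuclideanSpace ℝ (Fin n) :=
    fun aa => ∑ i ∈ Finset.range m, if aa = e i then xx i else 0 with hz
  set z' : V × V → EuclideanSpace ℝ (Fin n) :=
    fun aa => ∑ i ∈ Finset.range m, if aa = e i then xx (i+1) else 0 with hz'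
  set α : V → ℝ := fun u => if u = v p then 1 else 0 with hα
  have hyval : ∀ i, i < m → y (e i) = 1 := by
    intro i hi
    simp only [hy]
    rw [Finset.sum_eq_single_of_mem i (Finset.mem_range.2 hi) (fun j hj hne =>
      if_neg (fun hh => hne (heinj j hj i (Finset.mem_range.2 hi) hh.symm)))]
    simp
  have hzval : ∀ i, i < m → z (e i) = xx i := by
    intro i hi
    simp only [hz]
    rw [Finset.sum_eq_single_of_mem i (Finset.mem_range.2 hi) (fun j hj hne =>
      if_neg (fun hh => hne (heinj j hj i (Finset.mem_range.2 hi) hh.symm)))]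
    simp
  have hz'val : ∀ i, i < m → z' (e i) = xx (i+1) := by
    intro i hi
    simp only [hz']
    rw [Finset.sum_eq_single_of_mem i (Finset.mem_range.2 hi) (fun j hj hne =>
      if_neg (fun hh => hne (heinj j hj i (Finset.mem_range.2 hi) hh.symm)))]
    simp
  have hznot : ∀ aa, (∀ i, i < m → aa ≠ e i) → z aa = 0 := by
    intro aa haa; simp only [hz]
    exact Finset.sum_eq_zero fun j hj => if_neg (haa j (Finset.mem_range.1 hj))
  have hz'not : ∀ aa, (∀ i, i < m → aa ≠ e i) → z' aa = 0 := by
    intro aa haa; simp only [hz']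
    exact Finset.sum_eq_zero fun j hj => if_neg (haa j (Finset.mem_range.1 hj))
  -- feasibility
  have hfeas : G.RelaxFeasible s S S' y α z z' := by
    refine ⟨?_, ?_, ?_, ?_, ?_, ?_, ?_⟩
    · -- y bounds
      intro aa haa
      constructor
      · simp only [hy]
        exact Finset.sum_nonneg fun i _ => by positivity
      · by_cases hex : ∃ i, i < m ∧ aa = e i
        · obtain ⟨i, hi, rfl⟩ := hex
          rw [hyval i hi]
        · push_neg at hex
          have h0 : y aa = 0 :=
            Finset.sum_eq_zero fun j hj => if_neg (hex j (Finset.mem_range.1 hj))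
          rw [h0]; norm_num
    · -- α bounds
      intro u hu
      simp only [hα]
      by_cases hx : u = v p <;> simp [hx]
    · -- sum α = 1
      simp only [hα]
      rw [Finset.sum_ite_eq' S' (v p) (fun _ => (1:ℝ))]
      simp [hvpS']
    · -- source flow
      simp only [hy]
      rw [sum_edge_exchange]
      have hcong : ∀ i ∈ Finset.range m,
          (if e i ∈ (G.Ebar S S').filter (fun a => a.1 = s) then (1:ℝ) else 0)
            = if i = 0 then 1 else 0 := by
        intro i hi
        rw [Finset.mem_range] at hi
        have hiff : (e i ∈ (G.Ebar S S').filter (fun a => a.1 = s)) ↔ i = 0 := by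
          rw [Finset.mem_filter]
          constructor
          · rintro ⟨-, h1⟩
            have hww : w i = w 0 := by rw [hw0]; exact h1
            exact hinjw (Set.mem_Iic.2 (by omega)) (Set.mem_Iic.2 (by omega)) hww
          · rintro rfl; exact ⟨hmemEb 0 hm0, hw0⟩
        simp [hiff]
      rw [Finset.sum_congr rfl hcong, Finset.sum_ite_eq' (Finset.range m) 0 (fun _ => (1:ℝ))]
      simp [hm0]
    · -- flow into S'
      intro u hu
      simp only [hy, hα]
      rw [sum_edge_exchange]
      have hcong : ∀ i ∈ Finset.range m,
          (if e i ∈ (G.Ebar S S').filter (fun a => a.2 = u) then (1:ℝ) else 0)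
            = if i = m - 1 ∧ u = v p then 1 else 0 := by
        intro i hi
        rw [Finset.mem_range] at hi
        have hiff : (e i ∈ (G.Ebar S S').filter (fun a => a.2 = u)) ↔ (i = m - 1 ∧ u = v p) := by
          rw [Finset.mem_filter]
          constructor
          · rintro ⟨-, h1⟩
            have him : i + 1 = m := by
              by_contra hcon
              exact hS'notS u hu (h1 ▸ hQ' (i+1) (by omega))
            refine ⟨by omega, ?_⟩
            rw [← h1]
            show w (i + 1) = v p
            rw [him, hwm]
          · rintro ⟨rfl, rfl⟩
            refine ⟨hmemEb (m-1) (by omega), ?_⟩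
            show w (m - 1 + 1) = v p
            rw [show m - 1 + 1 = m by omega, hwm]
        simp [hiff]
      rw [Finset.sum_congr rfl hcong]
      by_cases hx : u = v p
      · simp only [hx, and_true]
        rw [Finset.sum_ite_eq' (Finset.range m) (m-1) (fun _ => (1:ℝ))]
        simp [Finset.mem_range.2 (by omega : m - 1 < m)]
      · simp [hx]
    · -- conservation
      intro u huS hus
      have hiff2 : ∀ i, i < m → ((e i ∈ (G.Ebar S S').filter (fun a => a.2 = u)) ↔ w (i+1) = u) := by
        intro i hi
        rw [Finset.mem_filter]
        exact ⟨fun hh => hh.2, fun hh => ⟨hmemEb i hi, hh⟩⟩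
      have hiff1 : ∀ i, i < m → ((e i ∈ (G.Ebar S S').filter (fun a => a.1 = u)) ↔ w i = u) := by
        intro i hi
        rw [Finset.mem_filter]
        exact ⟨fun hh => hh.2, fun hh => ⟨hmemEb i hi, hh⟩⟩
      constructor
      · simp only [hz, hz']
        rw [sum_edge_exchange, sum_edge_exchange]
        have c2 : ∀ i ∈ Finset.range m,
            (if e i ∈ (G.Ebar S S').filter (fun a => a.2 = u) then xx (i+1) else 0)
              = if w (i+1) = u then xx (i+1) else 0 := by
          intro i hi; rw [Finset.mem_range] at hi; simp [hiff2 i hi]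
        have c1 : ∀ i ∈ Finset.range m,
            (if e i ∈ (G.Ebar S S').filter (fun a => a.1 = u) then xx i else 0)
              = if w i = u then xx i else 0 := by
          intro i hi; rw [Finset.mem_range] at hi; simp [hiff1 i hi]
        rw [Finset.sum_congr rfl c2, Finset.sum_congr rfl c1]
        refine sum_shift_eq m (fun j => if w j = u then xx j else 0) ?_ ?_
        · show (if w 0 = u then xx 0 else 0) = 0
          exact if_neg (fun hh => hus (by rw [← hh]; exact hw0))
        · show (if w m = u then xx m else 0) = 0
          exact if_neg (fun hh => hpS (by rw [← hwm, hh]; exact huS))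
      · simp only [hy]
        rw [sum_edge_exchange, sum_edge_exchange]
        have c2 : ∀ i ∈ Finset.range m,
            (if e i ∈ (G.Ebar S S').filter (fun a => a.2 = u) then (1:ℝ) else 0)
              = if w (i+1) = u then (1:ℝ) else 0 := by
          intro i hi; rw [Finset.mem_range] at hi; simp [hiff2 i hi]
        have c1 : ∀ i ∈ Finset.range m,
            (if e i ∈ (G.Ebar S S').filter (fun a => a.1 = u) then (1:ℝ) else 0)
              = if w i = u then (1:ℝ) else 0 := by
          intro i hi; rw [Finset.mem_range] at hi; simp [hiff1 i hi]
        rw [Finset.sum_congr rfl c2, Finset.sum_congr rfl c1]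
        refine sum_shift_eq m (fun j => if w j = u then (1:ℝ) else 0) ?_ ?_
        · show (if w 0 = u then (1:ℝ) else 0) = 0
          exact if_neg (fun hh => hus (by rw [← hh]; exact hw0))
        · show (if w m = u then (1:ℝ) else 0) = 0
          exact if_neg (fun hh => hpS (by rw [← hwm, hh]; exact huS))
    · -- perspective
      intro aa haa
      by_cases hex : ∃ i, i < m ∧ aa = e i
      · obtain ⟨i, hi, rfl⟩ := hex
        rw [hyval i hi, hzval i hi, hz'val i hi]
        constructor
        · refine ⟨zero_le_one, ?_⟩
          rw [one_smul]
          exact hX' i (le_of_lt hi)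
        · refine ⟨zero_le_one, ?_⟩
          rw [one_smul]
          exact hX' (i+1) hi
      · push_neg at hex
        have hyz : y aa = 0 := by
          simp only [hy]
          exact Finset.sum_eq_zero fun j hj => if_neg (hex j (Finset.mem_range.1 hj))
        rw [hyz, hznot aa hex, hz'not aa hex]
        constructor
        · refine ⟨le_refl 0, ?_⟩
          rw [Set.zero_smul_set (G.nonempty _)]
          simp
        · refine ⟨le_refl 0, ?_⟩
          rw [Set.zero_smul_set (G.nonempty _)]
          simp
  -- objective value
  have hobj : G.relaxObj h S S' y α z z'
      = (∑ i ∈ Finset.range m, ‖xx i - xx (i+1)‖) + h (v p) := by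
    rw [GCS.relaxObj]
    congr 1
    · have himg : (Finset.range m).image e ⊆ G.Ebar S S' := by
        intro aa haa
        rw [Finset.mem_image] at haa
        obtain ⟨i, hi, rfl⟩ := haa
        exact hmemEb i (Finset.mem_range.1 hi)
      have hvan : ∀ aa ∈ G.Ebar S S', aa ∉ (Finset.range m).image e → ‖z aa - z' aa‖ = 0 := by
        intro aa haa hanot
        have hne : ∀ i, i < m → aa ≠ e i := by
          intro i hi hi2
          exact hanot (Finset.mem_image.2 ⟨i, Finset.mem_range.2 hi, hi2.symm⟩)
        rw [hznot aa hne, hz'not aa hne]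
        simp
      rw [← Finset.sum_subset himg hvan, Finset.sum_image heinj]
      refine Finset.sum_congr rfl fun i hi => ?_
      rw [Finset.mem_range] at hi
      rw [hzval i hi, hz'val i hi]
    · have hcong : ∀ u ∈ S', α u * h u = if u = v p then h (v p) else 0 := by
        intro u hu
        simp only [hα]
        by_cases hx : u = v p <;> simp [hx]
      rw [Finset.sum_congr rfl hcong, Finset.sum_ite_eq' S' (v p) (fun _ => h (v p))]
      simp [hvpS']
  -- suffix bound
  have hsufpath : G.Copt (v p) d
      ≤ ((∑ i ∈ Finset.range (k - p - 1), ‖x (p+i) - x (p+i+1)‖ : ℝ) : EReal) := by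
    apply sInf_le
    refine ⟨k - p, fun i => v (p + i), fun i => x (p + i),
      ⟨by omega, fun i hi => hEdges (p+i) (by omega), fun i hi => hPts (p+i) (by omega)⟩,
      by simp, ?_, ?_⟩
    · show v (p + (k - p - 1)) = d
      rw [show p + (k - p - 1) = k - 1 by omega, hend]
    · rfl
  have hh : (h (v p) : ℝ) ≤ ∑ i ∈ Finset.range (k - p - 1), ‖x (p+i) - x (p+i+1)‖ := by
    have := (hadm.2 (v p)).trans hsufpath
    exact_mod_cast this
  have htot : pathCost k x = (∑ i ∈ Finset.range p, ‖x i - x (i+1)‖)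
      + ∑ i ∈ Finset.range (k-p-1), ‖x (p+i) - x (p+i+1)‖ := by
    rw [pathCost, show k - 1 = p + (k - p - 1) by omega, Finset.sum_range_add]
  calc G.RstarOpt h s S S'
      ≤ ((G.relaxObj h S S' y α z z' : ℝ) : EReal) := sInf_le ⟨y, α, z, z', hfeas, rfl⟩
    _ ≤ ((pathCost k x : ℝ) : EReal) := by
        apply EReal.coe_le_coe_iff.2
        rw [hobj, htot]
        exact add_le_add hcost hh
    _ = G.Copt s d := hopt
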